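/- Let M be a compact Hausdorff topological space, X = C(M, ℝ) with the supremum norm, and Y any Banach space. Then every map f defined and C^∞ on a neighborhood of 0 in X with values in Y admits a global C^∞ representative: a C^∞ map F : X → Y coinciding with f on some neighborhood of 0. Moreover, if f and all of its iterated Fréchet derivatives are bounded on an open ball around 0, then F can be chosen so that F and all of its iterated Fréchet derivatives are bounded on all of X. -/

import Mathlib

open Filter Metric Set

set_option synthInstance.maxHeartbeats 1000000
set_option maxHeartbeats 1000000

/-! Auxiliary: smooth real functions with all iterated derivatives bounded. -/

def SlowFun (ψ : ℝ → ℝ) : Prop :=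
  ContDiff ℝ (⊤ : ℕ∞) ψ ∧ ∀ n : ℕ, ∃ C : ℝ, ∀ t : ℝ, |iteratedDeriv n ψ t| ≤ C

lemma SlowFun.deriv {ψ : ℝ → ℝ} (h : SlowFun ψ) : SlowFun (deriv ψ) := by
  refine ⟨(contDiff_infty_iff_deriv.mp h.1).2, fun n => ?_⟩
  obtain ⟨C, hC⟩ := h.2 (n + 1)
  exact ⟨C, fun t => by simpa [← iteratedDeriv_succ'] using hC t⟩

section Nem

variable {M : Type*} [TopologicalSpace M] [CompactSpace M]

noncomputable instance CM_sngrp : SeminormedAddCommGroup (C(M, ℝ) →L[ℝ] C(M, ℝ)) :=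
  inferInstance

noncomputable instance CM_nsp : NormedSpace ℝ (C(M, ℝ) →L[ℝ] C(M, ℝ)) := inferInstance

noncomputable def mulCLM : C(M, ℝ) →L[ℝ] C(M, ℝ) →L[ℝ] C(M, ℝ) :=
  ContinuousLinearMap.mul ℝ C(M, ℝ)

lemma mulCLM_apply (x y : C(M, ℝ)) (t : M) : mulCLM x y t = x t * y t := rfl

open scoped Classical in
noncomputable def nem (ψ : ℝ → ℝ) (x : C(M, ℝ)) : C(M, ℝ) :=
  if h : Continuous ψ then ⟨fun t => ψ (x t), h.comp x.continuous⟩ else 0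

lemma nem_apply {ψ : ℝ → ℝ} (h : Continuous ψ) (x : C(M, ℝ)) (t : M) :
    nem ψ x t = ψ (x t) := by
  rw [nem, dif_pos h]; rfl

lemma norm_nem_le {ψ : ℝ → ℝ} (h : Continuous ψ) {C : ℝ} (hC0 : 0 ≤ C)
    (hC : ∀ t, |ψ t| ≤ C) (x : C(M, ℝ)) : ‖nem ψ x‖ ≤ C :=
  (ContinuousMap.norm_le _ hC0).mpr fun t => by
    simpa [nem_apply h, Real.norm_eq_abs] using hC (x t)

lemma taylor_aux {ψ : ℝ → ℝ} (hψ : ContDiff ℝ (⊤ : ℕ∞) ψ) {K : ℝ}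
    (hK : ∀ t, |_root_.deriv (_root_.deriv ψ) t| ≤ K) (a b : ℝ) :
    |ψ (a + b) - ψ a - _root_.deriv ψ a * b| ≤ K * b ^ 2 := by
  have hd : Differentiable ℝ ψ := (contDiff_infty_iff_deriv.mp hψ).1
  have hd' : Differentiable ℝ (_root_.deriv ψ) :=
    (contDiff_infty_iff_deriv.mp (contDiff_infty_iff_deriv.mp hψ).2).1
  have lip : ∀ u v : ℝ, |_root_.deriv ψ u - _root_.deriv ψ v| ≤ K * |u - v| := by
    intro u v
    have := Convex.norm_image_sub_le_of_norm_deriv_le (f := _root_.deriv ψ) (s := Set.univ)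
      (fun x _ => hd' x) (fun x _ => by simpa [Real.norm_eq_abs] using hK x)
      convex_univ (Set.mem_univ v) (Set.mem_univ u)
    simpa [Real.norm_eq_abs] using this
  set g : ℝ → ℝ := fun u => ψ (a + u) - ψ a - _root_.deriv ψ a * u with hg_def
  have hg : ∀ u : ℝ, HasDerivAt g (_root_.deriv ψ (a + u) - _root_.deriv ψ a) u := by
    intro u
    have h1 : HasDerivAt (fun u : ℝ => ψ (a + u)) (_root_.deriv ψ (a + u)) u :=
      HasDerivAt.comp_const_add a u (hd (a + u)).hasDerivAt
    have h2 : HasDerivAt (fun u : ℝ => _root_.deriv ψ a * u) (_root_.deriv ψ a) u := by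
      simpa using (hasDerivAt_id u).const_mul (_root_.deriv ψ a)
    exact (h1.sub_const (ψ a)).sub h2
  have habs : ∀ u ∈ Set.uIcc (0 : ℝ) b, |u| ≤ |b| := by
    intro u hu
    rcases Set.mem_uIcc.mp hu with ⟨h1, h2⟩ | ⟨h1, h2⟩
    · exact abs_le.mpr ⟨le_trans (neg_nonpos.mpr (abs_nonneg b)) h1, le_trans h2 (le_abs_self b)⟩
    · exact abs_le.mpr ⟨le_trans (neg_abs_le b) h1, le_trans h2 (abs_nonneg b)⟩
  have key := Convex.norm_image_sub_le_of_norm_deriv_le (f := g) (s := Set.uIcc 0 b)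
    (fun u _ => (hg u).differentiableAt)
    (fun u hu => by
      rw [(hg u).deriv]
      calc ‖_root_.deriv ψ (a + u) - _root_.deriv ψ a‖ ≤ K * |a + u - a| := lip (a + u) a
        _ = K * |u| := by ring_nf
        _ ≤ K * |b| := by
            have hK0 : 0 ≤ K := le_trans (abs_nonneg _) (hK 0)
            exact mul_le_mul_of_nonneg_left (habs u hu) hK0)
    (convex_uIcc 0 b) (Set.left_mem_uIcc) (Set.right_mem_uIcc)
  have hg0 : g 0 = 0 := by simp [hg_def]
  have hkey : ‖g b - g 0‖ ≤ K * |b| * ‖b - 0‖ := key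
  rw [hg0, sub_zero, sub_zero] at hkey
  calc |ψ (a + b) - ψ a - _root_.deriv ψ a * b| = ‖g b‖ := rfl
    _ ≤ K * |b| * ‖b‖ := hkey
    _ = K * b ^ 2 := by rw [Real.norm_eq_abs, mul_assoc, abs_mul_abs_self]; ring

lemma nem_hasFDerivAt {ψ : ℝ → ℝ} (hψ : SlowFun ψ) (x : C(M, ℝ)) :
    HasFDerivAt (nem ψ) (mulCLM (nem (_root_.deriv ψ) x)) x := by
  obtain ⟨K, hK⟩ := hψ.2 2
  have hK' : ∀ t, |_root_.deriv (_root_.deriv ψ) t| ≤ K := by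
    intro t
    have h2 : iteratedDeriv 2 ψ = _root_.deriv (_root_.deriv ψ) := by
      rw [show (2 : ℕ) = 1 + 1 from rfl, iteratedDeriv_succ, iteratedDeriv_one]
    simpa [h2] using hK t
  have hK0 : 0 ≤ K := le_trans (abs_nonneg _) (hK 0)
  have hc : Continuous ψ := hψ.1.continuous
  have hc' : Continuous (_root_.deriv ψ) := hψ.deriv.1.continuous
  rw [hasFDerivAt_iff_isLittleO_nhds_zero]
  have bound : ∀ h : C(M, ℝ),
      ‖nem ψ (x + h) - nem ψ x - mulCLM (nem (_root_.deriv ψ) x) h‖ ≤ K * ‖h‖ ^ 2 := by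
    intro h
    refine (ContinuousMap.norm_le _ (by positivity)).mpr fun t => ?_
    have e1 : (nem ψ (x + h) - nem ψ x - mulCLM (nem (_root_.deriv ψ) x) h) t
        = ψ (x t + h t) - ψ (x t) - _root_.deriv ψ (x t) * h t := by
      simp [mulCLM_apply, nem_apply hc, nem_apply hc']
    rw [Real.norm_eq_abs, e1]
    calc |ψ (x t + h t) - ψ (x t) - _root_.deriv ψ (x t) * h t|
        ≤ K * (h t) ^ 2 := taylor_aux hψ.1 hK' (x t) (h t)
      _ ≤ K * ‖h‖ ^ 2 := by
          refine mul_le_mul_of_nonneg_left ?_ hK0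
          rw [← sq_abs]
          exact pow_le_pow_left₀ (abs_nonneg _) (h.norm_coe_le_norm t) 2
  have h1 : (fun h : C(M, ℝ) => nem ψ (x + h) - nem ψ x - mulCLM (nem (_root_.deriv ψ) x) h)
      =O[nhds 0] fun h : C(M, ℝ) => ‖h‖ ^ 2 := by
    refine Asymptotics.IsBigO.of_bound K (Filter.Eventually.of_forall fun h => ?_)
    rw [Real.norm_eq_abs (‖h‖ ^ 2), abs_of_nonneg (by positivity)]
    exact bound h
  exact h1.trans_isLittleO (Asymptotics.isLittleO_norm_pow_id one_lt_two)

lemma nem_fderiv {ψ : ℝ → ℝ} (hψ : SlowFun ψ) :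
    fderiv ℝ (nem (M := M) ψ) = ⇑(mulCLM (M := M)) ∘ nem (_root_.deriv ψ) :=
  funext fun x => (nem_hasFDerivAt hψ x).fderiv

lemma nem_contDiff (n : ℕ) : ∀ {ψ : ℝ → ℝ}, SlowFun ψ →
    ContDiff ℝ (n : ℕ) (nem (M := M) ψ) := by
  induction n with
  | zero =>
    intro ψ hψ
    have hdiff : Differentiable ℝ (nem (M := M) ψ) :=
      fun x => (nem_hasFDerivAt hψ x).differentiableAt
    exact contDiff_zero.mpr hdiff.continuous
  | succ n ih =>
    intro ψ hψ
    rw [Nat.cast_succ]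
    refine contDiff_succ_iff_fderiv.mpr
      ⟨fun x => (nem_hasFDerivAt hψ x).differentiableAt, ?_, ?_⟩
    · intro h; exact absurd h (by simp)
    · rw [nem_fderiv hψ]
      have h1 : ContDiff ℝ (n : ℕ) (nem (M := M) (_root_.deriv ψ)) := ih hψ.deriv
      exact ContDiff.comp (f := nem (_root_.deriv ψ)) (g := ⇑(mulCLM (M := M)))
        (ContinuousLinearMap.contDiff (E := C(M, ℝ)) (F := C(M, ℝ) →L[ℝ] C(M, ℝ)) (𝕜 := ℝ) (mulCLM (M := M))) h1

lemma nem_contDiff_top {ψ : ℝ → ℝ} (hψ : SlowFun ψ) :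
    ContDiff ℝ (⊤ : ℕ∞) (nem (M := M) ψ) :=
  contDiff_infty.mpr fun n => nem_contDiff n hψ

lemma nem_bound (n : ℕ) : ∀ {ψ : ℝ → ℝ}, SlowFun ψ →
    ∃ C : ℝ, ∀ x : C(M, ℝ), ‖iteratedFDeriv ℝ n (nem ψ) x‖ ≤ C := by
  induction n with
  | zero =>
    intro ψ hψ
    obtain ⟨C, hC⟩ := hψ.2 0
    refine ⟨max C 0, fun x => ?_⟩
    rw [norm_iteratedFDeriv_zero]
    exact norm_nem_le hψ.1.continuous (le_max_right C 0)
      (fun t => le_trans (by simpa [iteratedDeriv_zero] using hC t) (le_max_left C 0)) x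
  | succ n ih =>
    intro ψ hψ
    obtain ⟨C, hC⟩ := ih hψ.deriv
    have hC0 : 0 ≤ C := le_trans (norm_nonneg _) (hC 0)
    refine ⟨C, fun x => ?_⟩
    rw [← norm_iteratedFDeriv_fderiv]
    refine ContinuousMultilinearMap.opNorm_le_bound hC0 fun m => ?_
    refine ContinuousLinearMap.opNorm_le_bound _ (by positivity) fun h => ?_
    have hfd : ContDiff ℝ (n : ℕ) (fderiv ℝ (nem (M := M) ψ)) := by
      rw [nem_fderiv hψ]
      have h1 : ContDiff ℝ (n : ℕ) (nem (M := M) (_root_.deriv ψ)) := nem_contDiff n hψ.deriv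
      exact ContDiff.comp (f := nem (_root_.deriv ψ)) (g := ⇑(mulCLM (M := M)))
        (ContinuousLinearMap.contDiff (E := C(M, ℝ)) (F := C(M, ℝ) →L[ℝ] C(M, ℝ)) (𝕜 := ℝ) (mulCLM (M := M))) h1
    rw [← iteratedFDeriv_clm_apply_const_apply hfd le_rfl]
    have e : (fun y => fderiv ℝ (nem (M := M) ψ) y h) = fun y => nem (_root_.deriv ψ) y * h :=
      funext fun y => by rw [(nem_hasFDerivAt hψ y).fderiv]; rfl
    rw [e]
    have hmul : ‖iteratedFDeriv ℝ n (fun y => nem (_root_.deriv ψ) y * h) x‖ ≤ C * ‖h‖ := by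
      have hb := norm_iteratedFDeriv_mul_le (𝕜 := ℝ) (A := C(M, ℝ))
        (nem_contDiff n hψ.deriv) (contDiff_const (c := h)) x
        (le_refl ((n : ℕ) : WithTop ℕ∞))
      have hsum : ∑ i ∈ Finset.range (n + 1),
          (n.choose i : ℝ) * ‖iteratedFDeriv ℝ i (nem (M := M) (_root_.deriv ψ)) x‖ *
            ‖iteratedFDeriv ℝ (n - i) (fun _ : C(M, ℝ) => h) x‖
          = (n.choose n : ℝ) * ‖iteratedFDeriv ℝ n (nem (M := M) (_root_.deriv ψ)) x‖ *
            ‖iteratedFDeriv ℝ (n - n) (fun _ : C(M, ℝ) => h) x‖ := by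
        refine Finset.sum_eq_single_of_mem n (Finset.self_mem_range_succ n) fun i hi hne => ?_
        have hni : n - i ≠ 0 :=
          Nat.sub_ne_zero_of_lt (lt_of_le_of_ne (Nat.lt_succ_iff.mp (Finset.mem_range.mp hi)) hne)
        simp [iteratedFDeriv_const_of_ne hni]
      rw [hsum] at hb
      refine hb.trans ?_
      rw [Nat.sub_self, Nat.choose_self, norm_iteratedFDeriv_zero, Nat.cast_one, one_mul]
      exact mul_le_mul_of_nonneg_right (hC x) (norm_nonneg h)
    calc ‖(iteratedFDeriv ℝ n (fun y => nem (M := M) (_root_.deriv ψ) y * h) x) m‖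
        ≤ ‖iteratedFDeriv ℝ n (fun y => nem (M := M) (_root_.deriv ψ) y * h) x‖ * ∏ i, ‖m i‖ :=
          ContinuousMultilinearMap.le_opNorm _ m
      _ ≤ (C * ‖h‖) * ∏ i, ‖m i‖ := by
          refine mul_le_mul_of_nonneg_right hmul ?_
          exact Finset.prod_nonneg fun i _ => norm_nonneg _
      _ = (C * ∏ i, ‖m i‖) * ‖h‖ := by ring

end Nem

/-! The saturation function: smooth, equal to identity near `0`, bounded, all derivatives
bounded. -/

lemma abs_le_abs_of_mem_uIcc {b u : ℝ} (hu : u ∈ Set.uIcc (0 : ℝ) b) : |u| ≤ |b| := by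
  rcases Set.mem_uIcc.mp hu with ⟨h1, h2⟩ | ⟨h1, h2⟩
  · exact abs_le.mpr ⟨le_trans (neg_nonpos.mpr (abs_nonneg b)) h1, le_trans h2 (le_abs_self b)⟩
  · exact abs_le.mpr ⟨le_trans (neg_abs_le b) h1, le_trans h2 (abs_nonneg b)⟩

noncomputable def bumpχ : ContDiffBump (0 : ℝ) := ⟨1, 2, one_pos, one_lt_two⟩

noncomputable def satS (t : ℝ) : ℝ := ∫ s in (0 : ℝ)..t, bumpχ s

lemma derivS : _root_.deriv satS = fun t => bumpχ t :=
  funext fun t => Continuous.deriv_integral _ bumpχ.continuous 0 t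

lemma diffS : Differentiable ℝ satS :=
  fun t => ((bumpχ.continuous).integral_hasStrictDerivAt 0 t).hasDerivAt.differentiableAt

lemma smoothS : ContDiff ℝ (⊤ : ℕ∞) satS :=
  contDiff_infty_iff_deriv.mpr ⟨diffS, by rw [derivS]; exact bumpχ.contDiff⟩

lemma satS_id {t : ℝ} (ht : |t| ≤ 1) : satS t = t := by
  have h1 : Set.EqOn (fun s => (bumpχ : ℝ → ℝ) s) (fun _ => (1 : ℝ)) (Set.uIcc 0 t) := by
    intro s hs
    refine bumpχ.one_of_mem_closedBall ?_
    have : |s| ≤ |t| := abs_le_abs_of_mem_uIcc hs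
    simp only [Metric.mem_closedBall, Real.dist_eq, sub_zero]
    calc |s| ≤ |t| := this
      _ ≤ 1 := ht
  rw [satS, intervalIntegral.integral_congr h1]
  simp

lemma χzero {s : ℝ} (hs : 2 ≤ |s|) : (bumpχ : ℝ → ℝ) s = 0 := by
  have hns : s ∉ Function.support (bumpχ : ℝ → ℝ) := by
    rw [bumpχ.support_eq]
    intro h
    rw [Metric.mem_ball, Real.dist_eq, sub_zero] at h
    exact absurd h (not_lt.mpr hs)
  exact Function.notMem_support.mp hns

lemma intχ (a b : ℝ) :
    IntervalIntegrable (fun s => (bumpχ : ℝ → ℝ) s) MeasureTheory.volume a b :=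
  (bumpχ.continuous).intervalIntegrable a b

lemma satS_bound (t : ℝ) : |satS t| ≤ 2 := by
  have hle1 : ∀ s : ℝ, ‖(bumpχ : ℝ → ℝ) s‖ ≤ 1 := fun s => by
    rw [Real.norm_eq_abs, abs_of_nonneg bumpχ.nonneg]; exact bumpχ.le_one
  have base : ∀ u : ℝ, |u| ≤ 2 → |satS u| ≤ 2 := by
    intro u hu
    have h1 := intervalIntegral.norm_integral_le_of_norm_le_const (C := 1)
      (f := fun s => (bumpχ : ℝ → ℝ) s) (a := 0) (b := u) (fun x _ => hle1 x)
    rw [Real.norm_eq_abs] at h1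
    calc |satS u| ≤ 1 * |u - 0| := h1
      _ = |u| := by rw [sub_zero, one_mul]
      _ ≤ 2 := hu
  by_cases h : |t| ≤ 2
  · exact base t h
  · push_neg at h
    rcases le_or_gt 0 t with hsgn | hsgn
    · have ht2 : 2 < t := by rwa [abs_of_nonneg hsgn] at h
      have h0 : ∫ s in (2 : ℝ)..t, (bumpχ : ℝ → ℝ) s = 0 := by
        have heq : Set.EqOn (fun s => (bumpχ : ℝ → ℝ) s) (fun _ => (0 : ℝ))
            (Set.uIcc 2 t) := by
          intro s hs
          rw [Set.uIcc_of_le (by linarith)] at hs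
          exact χzero (by rw [abs_of_nonneg (by linarith [hs.1])]; exact hs.1)
        rw [intervalIntegral.integral_congr heq]; simp
      have hadd := intervalIntegral.integral_add_adjacent_intervals (intχ 0 2) (intχ 2 t)
      have e : satS t = satS 2 := by rw [satS, satS, ← hadd, h0, add_zero]
      rw [e]; exact base 2 (by norm_num)
    · have ht2 : t < -2 := by
        rw [abs_of_neg hsgn] at h; linarith
      have h0 : ∫ s in (-2 : ℝ)..t, (bumpχ : ℝ → ℝ) s = 0 := by
        have heq : Set.EqOn (fun s => (bumpχ : ℝ → ℝ) s) (fun _ => (0 : ℝ))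
            (Set.uIcc (-2) t) := by
          intro s hs
          rw [Set.uIcc_of_ge (by linarith)] at hs
          refine χzero ?_
          rw [abs_of_nonpos (by linarith [hs.2])]
          linarith [hs.2]
        rw [intervalIntegral.integral_congr heq]; simp
      have hadd := intervalIntegral.integral_add_adjacent_intervals (intχ 0 (-2)) (intχ (-2) t)
      have e : satS t = satS (-2) := by rw [satS, satS, ← hadd, h0, add_zero]
      rw [e]; exact base (-2) (by norm_num)

lemma satS_iteratedDeriv_bound (n : ℕ) : ∃ B : ℝ, ∀ t, |iteratedDeriv n satS t| ≤ B := by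
  cases n with
  | zero => exact ⟨2, fun t => by simpa [iteratedDeriv_zero] using satS_bound t⟩
  | succ n =>
    have hcont : Continuous (iteratedFDeriv ℝ n (bumpχ : ℝ → ℝ)) :=
      (bumpχ.contDiff (n := ⊤)).continuous_iteratedFDeriv (by exact_mod_cast le_top)
    obtain ⟨B, hB⟩ := (bumpχ.hasCompactSupport.iteratedFDeriv n).exists_bound_of_continuous hcont
    refine ⟨B, fun t => ?_⟩
    have e : iteratedDeriv (n + 1) satS = iteratedDeriv n (bumpχ : ℝ → ℝ) := by
      rw [iteratedDeriv_succ', derivS]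
    rw [e, ← Real.norm_eq_abs, ← norm_iteratedFDeriv_eq_norm_iteratedDeriv]
    exact hB t

noncomputable def sat (c t : ℝ) : ℝ := c * satS (c⁻¹ * t)

lemma sat_id {c : ℝ} (hc : 0 < c) {t : ℝ} (ht : |t| ≤ c) : sat c t = t := by
  have h1 : |c⁻¹ * t| ≤ 1 := by
    rw [abs_mul, abs_of_nonneg (inv_nonneg.mpr hc.le)]
    rw [inv_mul_le_iff₀ hc]
    simpa using ht
  rw [sat, satS_id h1]
  field_simp

lemma sat_bound {c : ℝ} (hc : 0 < c) (t : ℝ) : |sat c t| ≤ 2 * c := by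
  rw [sat, abs_mul, abs_of_nonneg hc.le, mul_comm (2 : ℝ) c]
  exact mul_le_mul_of_nonneg_left (satS_bound _) hc.le

lemma sat_contDiff (c : ℝ) : ContDiff ℝ (⊤ : ℕ∞) (sat c) :=
  contDiff_const.mul (smoothS.comp ((contDiff_const (c := c⁻¹)).mul contDiff_id))

lemma sat_slow {c : ℝ} (hc : 0 < c) : SlowFun (sat c) := by
  refine ⟨sat_contDiff c, fun n => ?_⟩
  obtain ⟨B, hB⟩ := satS_iteratedDeriv_bound n
  have hg : ContDiff ℝ (n : ℕ) (fun t : ℝ => satS (c⁻¹ * t)) :=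
    (smoothS.of_le (by exact_mod_cast le_top)).comp
      ((contDiff_const (c := c⁻¹)).mul contDiff_id)
  have e1 : iteratedDeriv n (sat c) = fun t => c * iteratedDeriv n (fun u => satS (c⁻¹ * u)) t := by
    funext t
    simp only [← iteratedDerivWithin_univ]
    exact iteratedDerivWithin_const_mul (Set.mem_univ t) uniqueDiffOn_univ c hg.contDiffWithinAt
  have e2 : iteratedDeriv n (fun u => satS (c⁻¹ * u))
      = fun u => (c⁻¹) ^ n * iteratedDeriv n satS (c⁻¹ * u) :=
    iteratedDeriv_comp_const_mul (smoothS.of_le (by exact_mod_cast le_top)) c⁻¹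
  refine ⟨|c| * |c⁻¹| ^ n * B, fun t => ?_⟩
  rw [e1, e2]
  rw [abs_mul, abs_mul, abs_pow]
  rw [mul_assoc]
  refine mul_le_mul_of_nonneg_left ?_ (abs_nonneg c)
  exact mul_le_mul_of_nonneg_left (hB _) (pow_nonneg (abs_nonneg _) n)

lemma exists_ub (u : ℕ → ℝ) (n : ℕ) : ∃ C : ℝ, ∀ i ≤ n, u i ≤ C := by
  induction n with
  | zero => exact ⟨u 0, fun i hi => by rw [Nat.le_zero.mp hi]⟩
  | succ n ih =>
    obtain ⟨C, hC⟩ := ih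
    refine ⟨max C (u (n + 1)), fun i hi => ?_⟩
    rcases eq_or_lt_of_le hi with h | h
    · rw [h]; exact le_max_right _ _
    · exact le_trans (hC i (Nat.lt_succ_iff.mp h)) (le_max_left _ _)

open Filter Metric

/-- For `X = C(M, ℝ)` (`M` compact Hausdorff, sup norm) and any Banach space `Y`, every map
`f` that is `C^∞` on a neighborhood of `0` admits a global `C^∞` representative `F`.
Moreover, if `f` and all its iterated derivatives are bounded on an open ball around `0`,
then `F` can be chosen bounded on all of `X` together with all its iterated derivatives. -/
theorem CM_extension
    {M : Type*} [TopologicalSpace M] [CompactSpace M] [T2Space M]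
    {Y : Type*} [NormedAddCommGroup Y] [NormedSpace ℝ Y] [CompleteSpace Y]
    (f : C(M, ℝ) → Y) (U : Set C(M, ℝ)) (hUopen : IsOpen U) (hU0 : (0 : C(M, ℝ)) ∈ U)
    (hf : ContDiffOn ℝ (⊤ : ℕ∞) f U) :
    (∃ F : C(M, ℝ) → Y, ContDiff ℝ (⊤ : ℕ∞) F ∧ ∀ᶠ x in nhds (0 : C(M, ℝ)), F x = f x) ∧
      ∀ R : ℝ, 0 < R → ball (0 : C(M, ℝ)) R ⊆ U →
        (∀ n : ℕ, ∃ C : ℝ, ∀ x ∈ ball (0 : C(M, ℝ)) R,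
          ‖iteratedFDerivWithin ℝ n f (ball (0 : C(M, ℝ)) R) x‖ ≤ C) →
        ∃ F : C(M, ℝ) → Y, ContDiff ℝ (⊤ : ℕ∞) F ∧
          (∀ᶠ x in nhds (0 : C(M, ℝ)), F x = f x) ∧
          ∀ n : ℕ, ∃ C : ℝ, ∀ x, ‖iteratedFDeriv ℝ n F x‖ ≤ C := by
  have key : ∀ r : ℝ, 0 < r →
      ∃ g : C(M, ℝ) → C(M, ℝ), ContDiff ℝ (⊤ : ℕ∞) g ∧
        (∀ x : C(M, ℝ), ‖x‖ < r / 3 → g x = x) ∧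
        (∀ x, ‖g x‖ < r) ∧
        (∀ n : ℕ, ∃ C, ∀ x, ‖iteratedFDeriv ℝ n g x‖ ≤ C) := by
    intro r hr
    have hc : (0 : ℝ) < r / 3 := by positivity
    have hslow := sat_slow hc
    refine ⟨nem (sat (r / 3)), nem_contDiff_top hslow, ?_, ?_, fun n => nem_bound n hslow⟩
    · intro x hx
      ext t
      rw [nem_apply hslow.1.continuous]
      refine sat_id hc ?_
      rw [← Real.norm_eq_abs]
      exact le_trans (x.norm_coe_le_norm t) hx.le
    · intro x
      have h1 := norm_nem_le hslow.1.continuous (by positivity : (0 : ℝ) ≤ 2 * (r / 3))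
        (sat_bound hc) x
      linarith
  constructor
  · obtain ⟨ε, hε, hball⟩ := Metric.isOpen_iff.mp hUopen 0 hU0
    obtain ⟨g, hg, hgid, hgb, -⟩ := key ε hε
    refine ⟨f ∘ g, ?_, ?_⟩
    · rw [← contDiffOn_univ]
      exact hf.comp hg.contDiffOn fun x _ => hball (mem_ball_zero_iff.mpr (hgb x))
    · refine Filter.eventually_of_mem (Metric.ball_mem_nhds 0 (by positivity : (0 : ℝ) < ε / 3)) ?_
      intro x hx
      simp only [Function.comp_apply]
      rw [hgid x (mem_ball_zero_iff.mp hx)]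
  · intro R hR hRU hbd
    obtain ⟨g, hg, hgid, hgb, hgbd⟩ := key R hR
    have hmaps : ∀ x : C(M, ℝ), g x ∈ ball (0 : C(M, ℝ)) R :=
      fun x => mem_ball_zero_iff.mpr (hgb x)
    refine ⟨f ∘ g, ?_, ?_, ?_⟩
    · rw [← contDiffOn_univ]
      exact hf.comp hg.contDiffOn fun x _ => hRU (hmaps x)
    · refine Filter.eventually_of_mem (Metric.ball_mem_nhds 0 (by positivity : (0 : ℝ) < R / 3)) ?_
      intro x hx
      simp only [Function.comp_apply]
      rw [hgid x (mem_ball_zero_iff.mp hx)]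
    · intro n
      obtain ⟨Cm, hCm⟩ := exists_ub (fun i => (hbd i).choose) n
      obtain ⟨Dm0, hDm0⟩ := exists_ub (fun i => (hgbd i).choose) n
      set Dm := max 1 Dm0 with hDm_def
      have hDm1 : (1 : ℝ) ≤ Dm := le_max_left _ _
      refine ⟨n.factorial * Cm * Dm ^ n, fun x => ?_⟩
      have hfC : ∀ i ≤ n, ‖iteratedFDerivWithin ℝ i f (ball (0 : C(M, ℝ)) R) (g x)‖ ≤ Cm := by
        intro i hi
        exact le_trans ((hbd i).choose_spec (g x) (hmaps x)) (hCm i hi)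
      have hgD : ∀ i : ℕ, 1 ≤ i → i ≤ n →
          ‖iteratedFDerivWithin ℝ i g Set.univ x‖ ≤ Dm ^ i := by
        intro i h1 h2
        rw [iteratedFDerivWithin_univ]
        calc ‖iteratedFDeriv ℝ i g x‖ ≤ (hgbd i).choose := (hgbd i).choose_spec x
          _ ≤ Dm0 := hDm0 i h2
          _ ≤ Dm := le_max_right _ _
          _ ≤ Dm ^ i := le_self_pow₀ hDm1 (by omega)
      have h := norm_iteratedFDerivWithin_comp_le (𝕜 := ℝ)
        (hf.mono hRU) hg.contDiffOn (by exact_mod_cast le_top)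
        ((isOpen_ball).uniqueDiffOn) uniqueDiffOn_univ
        (fun x _ => hmaps x) (Set.mem_univ x) hfC hgD
      rw [← iteratedFDerivWithin_univ]
      exact h
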